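/- arXiv:1605.05825 — 2 statements merged into one kernel-verified Lean document; each statement's English description precedes it below -/
import Mathlib

section
/- Let $a, z, x_0 \in \mathbb{R}$ with $a > 0$ (playing the role of $e^{\int_0^T r_s ds}$), let $P_0, N_0 > 0$ with $P_0 a^{-2} \le 1$ and $N_0 a^{-2} < 1$, and suppose $z > x_0 a$. Define $V(\eta) = P_0 \big((x_0 - \eta a^{-1})^+\big)^2 + N_0 \big((x_0 - \eta a^{-1})^-\big)^2 - (\eta - z)^2$. Then $\sup_{\eta \in \mathbb{R}} V(\eta) = \dfrac{N_0 a^{-2}}{1 - N_0 a^{-2}} (z - x_0 a)^2$, and the supremum is attained at $\eta^* = \dfrac{z - N_0 a^{-2} x_0 a}{1 - N_0 a^{-2}} > x_0 a$. -/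
/-- Lagrange dual maximization for the mean-variance efficient frontier:
`sup_η V(η) = (N₀ a⁻²)/(1 - N₀ a⁻²) (z - x₀ a)²`, attained at
`η* = (z - N₀ a⁻² x₀ a)/(1 - N₀ a⁻²) > x₀ a`. -/
theorem mv_dual_sup
    (a z x0 P0 N0 : ℝ) (ha : 0 < a) (hP0 : 0 < P0) (hN0 : 0 < N0)
    (hP0a : P0 / a ^ 2 ≤ 1) (hN0a : N0 / a ^ 2 < 1) (hz : x0 * a < z)
    (V : ℝ → ℝ)
    (hV : ∀ η, V η = P0 * (max (x0 - η / a) 0) ^ 2 + N0 * (max (-(x0 - η / a)) 0) ^ 2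
      - (η - z) ^ 2) :
    IsGreatest (Set.range V) ((N0 / a ^ 2) / (1 - N0 / a ^ 2) * (z - x0 * a) ^ 2) ∧
      V ((z - (N0 / a ^ 2) * x0 * a) / (1 - N0 / a ^ 2)) =
        (N0 / a ^ 2) / (1 - N0 / a ^ 2) * (z - x0 * a) ^ 2 ∧
      x0 * a < (z - (N0 / a ^ 2) * x0 * a) / (1 - N0 / a ^ 2) := by
  have ha2 : (0:ℝ) < a ^ 2 := by positivity
  set c : ℝ := N0 / a ^ 2 with hc
  have hc0 : 0 < c := div_pos hN0 ha2
  have h1c : 0 < 1 - c := by linarith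
  set η : ℝ := (z - c * x0 * a) / (1 - c) with hη
  have hNa : N0 = c * a ^ 2 := by rw [hc, div_mul_cancel₀ N0 (ne_of_gt ha2)]
  have hηm : η - x0 * a = (z - x0 * a) / (1 - c) := by
    rw [hη]; field_simp; ring
  have hηgt : x0 * a < η := by
    have h := div_pos (show (0:ℝ) < z - x0 * a by linarith) h1c
    linarith
  have hx0 : x0 - η / a ≤ 0 := by
    rw [sub_nonpos, le_div_iff₀ ha]; linarith
  have hVη : V η = c / (1 - c) * (z - x0 * a) ^ 2 := by
    rw [hV, max_eq_right hx0, max_eq_left (by linarith)]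
    rw [hNa, hη]
    field_simp
    ring
  have hub : ∀ y ∈ Set.range V, y ≤ c / (1 - c) * (z - x0 * a) ^ 2 := by
    rintro _ ⟨t, rfl⟩
    rw [hV]
    have hM0 : 0 ≤ c / (1 - c) * (z - x0 * a) ^ 2 := by positivity
    rcases le_or_gt t (x0 * a) with h | h
    · have h1 : 0 ≤ x0 - t / a := by
        rw [sub_nonneg, div_le_iff₀ ha]; linarith
      rw [max_eq_left h1, max_eq_right (by linarith)]
      have hq : (x0 - t / a) * a = x0 * a - t := by field_simp
      have hP : P0 * (x0 - t / a) ^ 2 ≤ (x0 * a - t) ^ 2 := by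
        have hPle : P0 ≤ a ^ 2 := by
          rw [div_le_one ha2] at hP0a; exact hP0a
        rw [← hq]
        nlinarith [sq_nonneg (x0 - t / a)]
      nlinarith [sq_nonneg (x0 - t / a)]
    · have h1 : x0 - t / a ≤ 0 := by
        rw [sub_nonpos, le_div_iff₀ ha]; linarith
      rw [max_eq_right h1, max_eq_left (by linarith)]
      have hq : (-(x0 - t / a)) * a = t - x0 * a := by field_simp; ring
      have hN : N0 * (-(x0 - t / a)) ^ 2 = c * (t - x0 * a) ^ 2 := by
        rw [hNa, ← hq]; ring
      rw [hN]
      rw [show c / (1 - c) * (z - x0 * a) ^ 2 = c * (z - x0 * a) ^ 2 / (1 - c) by ring,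
        le_div_iff₀ h1c]
      have key : c * (z - x0 * a) ^ 2 -
          (c * (t - x0 * a) ^ 2 - (t - z) ^ 2) * (1 - c) =
          ((1 - c) * t - (z - c * x0 * a)) ^ 2 := by ring
      linarith [sq_nonneg ((1 - c) * t - (z - c * x0 * a))]
  exact ⟨⟨⟨η, hVη⟩, hub⟩, hVη, hηgt⟩
end

section
/- Let $(Y^0, Y^1)$ solve the recursive system $Y^1_t(\theta) = h(\theta) + f(0)(T-t)$ for $\theta \wedge T \le t \le T$ and $Y^0_t = c + \int_t^T f(Y^1_s(s) - Y^0_s) ds$ for $0 \le t \le T$, with $f$ Lipschitz and $h$ bounded measurable. Define $Y_t = Y^0_t 1_{\{t < \tau\}} + Y^1_t(\tau) 1_{\{t \ge \tau\}}$ and $U_t = (Y^1_t(t) - Y^0_t) 1_{\{t \le \tau\}}$ for a fixed value $\tau \in (0,T]$. Then $Y$ is a càdlàg function on $[0,T]$ satisfying, pathwise, $Y_t = Y_0 - \int_0^t f(U_s)\, ds + \sum_{0 < s \le t} U_s \Delta L_s$ where $L_s = 1_{\{\tau \le s\}}$, and $Y_T = c\,1_{\{T < \tau\}} + h(\tau)\,1_{\{\tau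 \le T\}}$. -/
open Set Filter intervalIntegral

/-- Pathwise verification that pasting the before-default solution `Y⁰` and the
after-default solution `Y¹_t(θ) = h(θ) + f(0)(T-t)` at a fixed time `τ ∈ (0,T]` yields a
càdlàg solution of `-dY_t = f(U_t) dt - U_t dL_t` with terminal value
`c 1_{T<τ} + h(τ) 1_{τ≤T}`, where `U_t = (Y¹_t(t) - Y⁰_t) 1_{t≤τ}`. -/
theorem pasted_solution_single_jump
    (T τ c : ℝ) (hτ0 : 0 < τ) (hτT : τ ≤ T)
    (f : ℝ → ℝ) (K : NNReal) (hf : LipschitzWith K f)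
    (h : ℝ → ℝ) (hmeas : Measurable h) (Ch : ℝ) (hbdd : ∀ θ, |h θ| ≤ Ch)
    (Y1 : ℝ → ℝ → ℝ) (hY1 : ∀ t θ, Y1 t θ = h θ + f 0 * (T - t))
    (Y0 : ℝ → ℝ) (hY0cont : Continuous Y0)
    (hY0 : ∀ t ∈ Icc 0 T, Y0 t = c + ∫ s in t..T, f (Y1 s s - Y0 s))
    (Y U : ℝ → ℝ)
    (hY : ∀ t, Y t = if t < τ then Y0 t else Y1 t τ)
    (hU : ∀ t, U t = if t ≤ τ then Y1 t t - Y0 t else 0) :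
    (∀ t ∈ Icc 0 T, ContinuousWithinAt Y (Ici t) t ∧
      ∃ l : ℝ, Tendsto Y (nhdsWithin t (Iio t)) (nhds l)) ∧
    (∀ t ∈ Icc 0 T,
      Y t = Y 0 - (∫ s in (0 : ℝ)..t, f (U s)) + (if τ ≤ t then U τ else 0)) ∧
    Y T = (if T < τ then c else h τ) := by
  have hT0 : (0:ℝ) ≤ T := le_trans hτ0.le hτT
  obtain ⟨M, hM⟩ := (isCompact_Icc : IsCompact (Icc (0:ℝ) T)).exists_bound_of_continuousOn
    hY0cont.continuousOn
  -- generic integrability lemma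
  have key : ∀ (g : ℝ → ℝ), Measurable g → (∀ s ∈ Icc 0 T, |g s| ≤ Ch + |f 0| * T + M) →
      ∀ a ∈ Icc (0:ℝ) T, ∀ b ∈ Icc (0:ℝ) T,
      IntervalIntegrable (fun s => f (g s)) MeasureTheory.volume a b := by
    intro g hg hgb a ha b hb
    rw [intervalIntegrable_iff]
    have hsub : Set.uIoc a b ⊆ Icc 0 T :=
      Set.uIoc_subset_uIcc.trans (Set.uIcc_subset_Icc ha hb)
    apply MeasureTheory.Measure.integrableOn_of_bounded
      (M := |f 0| + K * (Ch + |f 0| * T + M))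
    · exact measure_Ioc_lt_top.ne
    · exact ((hf.continuous.measurable).comp hg).aestronglyMeasurable
    · refine (MeasureTheory.ae_restrict_iff' measurableSet_uIoc).2 (Filter.Eventually.of_forall ?_)
      intro s hs
      have h1 : |f (g s) - f 0| ≤ K * |g s| := by
        simpa [Real.dist_eq] using hf.dist_le_mul (g s) 0
      have h2 : |g s| ≤ Ch + |f 0| * T + M := hgb s (hsub hs)
      calc ‖f (g s)‖ = |f (g s) - f 0 + f 0| := by norm_num
        _ ≤ |f (g s) - f 0| + |f 0| := abs_add_le _ _
        _ ≤ (K : ℝ) * (Ch + |f 0| * T + M) + |f 0| := by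
            refine add_le_add (h1.trans ?_) le_rfl
            exact mul_le_mul_of_nonneg_left h2 K.coe_nonneg
        _ = |f 0| + (K : ℝ) * (Ch + |f 0| * T + M) := by ring
  -- the two integrands
  have hGm : Measurable (fun s => Y1 s s - Y0 s) := by
    have : (fun s => Y1 s s - Y0 s) = fun s => h s + f 0 * (T - s) - Y0 s := by
      funext s; rw [hY1]
    rw [this]
    exact (hmeas.add (measurable_const.mul (measurable_const.sub measurable_id))).sub
      hY0cont.measurable
  have hGb : ∀ s ∈ Icc (0:ℝ) T, |Y1 s s - Y0 s| ≤ Ch + |f 0| * T + M := by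
    intro s hs
    rw [hY1]
    have h1 : |f 0 * (T - s)| ≤ |f 0| * T := by
      rw [abs_mul]
      refine mul_le_mul_of_nonneg_left ?_ (abs_nonneg _)
      rw [abs_of_nonneg (by linarith [hs.2])]
      linarith [hs.1]
    calc |h s + f 0 * (T - s) - Y0 s| ≤ |h s| + |f 0 * (T - s)| + |Y0 s| := by
          refine (abs_sub _ _).trans ?_
          exact add_le_add (abs_add_le _ _) le_rfl
      _ ≤ Ch + |f 0| * T + M := by
          refine add_le_add (add_le_add (hbdd s) h1) (hM s hs)
  have hUm : Measurable U := by
    have : U = fun s => if s ≤ τ then Y1 s s - Y0 s else 0 := funext hU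
    rw [this]
    exact Measurable.ite measurableSet_Iic hGm measurable_const
  have hUb : ∀ s ∈ Icc (0:ℝ) T, |U s| ≤ Ch + |f 0| * T + M := by
    intro s hs
    rw [hU]
    split
    · exact hGb s hs
    · simp only [abs_zero]
      have := hGb 0 (by constructor <;> norm_num [hT0])
      linarith [abs_nonneg (Y1 0 0 - Y0 0)]
  have hGint := key _ hGm hGb
  have hUint := key _ hUm hUb
  -- integral identity for Y0
  have hY0id : ∀ t ∈ Icc (0:ℝ) T,
      Y0 t = Y0 0 - ∫ s in (0:ℝ)..t, f (Y1 s s - Y0 s) := by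
    intro t ht
    have h0T : (0:ℝ) ∈ Icc (0:ℝ) T := ⟨le_refl _, hT0⟩
    have hTT : T ∈ Icc (0:ℝ) T := ⟨hT0, le_refl _⟩
    have hadd := intervalIntegral.integral_add_adjacent_intervals
      (hGint 0 h0T t ht) (hGint t ht T hTT)
    have e0 := hY0 0 h0T
    have et := hY0 t ht
    rw [e0, et]
    linarith [hadd]
  refine ⟨?_, ?_, ?_⟩
  · -- càdlàg
    intro t ht
    constructor
    · by_cases htτ : t < τ
      · have hev : Y =ᶠ[nhds t] Y0 := by
          filter_upwards [Iio_mem_nhds htτ] with s hs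
          rw [hY, if_pos (mem_Iio.mp hs)]
        exact ((hY0cont.continuousAt).congr hev.symm).continuousWithinAt
      · push_neg at htτ
        have hcont : ContinuousWithinAt (fun s => h τ + f 0 * (T - s)) (Ici t) t :=
          (continuous_const.add (continuous_const.mul
            (continuous_const.sub continuous_id))).continuousWithinAt
        refine hcont.congr ?_ ?_
        · intro s hs
          rw [hY, hY1, if_neg (not_lt.2 (le_trans htτ hs))]
        · rw [hY, hY1, if_neg (not_lt.2 htτ)]
    · by_cases htτ : t ≤ τ
      · refine ⟨Y0 t, ?_⟩
        have : Tendsto Y0 (nhdsWithin t (Iio t)) (nhds (Y0 t)) :=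
          (hY0cont.tendsto t).mono_left nhdsWithin_le_nhds
        refine this.congr' ?_
        filter_upwards [self_mem_nhdsWithin] with s hs
        rw [hY, if_pos (lt_of_lt_of_le hs htτ)]
      · push_neg at htτ
        refine ⟨h τ + f 0 * (T - t), ?_⟩
        have hcont : Tendsto (fun s => h τ + f 0 * (T - s)) (nhdsWithin t (Iio t))
            (nhds (h τ + f 0 * (T - t))) :=
          ((continuous_const.add (continuous_const.mul
            (continuous_const.sub continuous_id))).tendsto t).mono_left nhdsWithin_le_nhds
        refine hcont.congr' ?_
        filter_upwards [mem_nhdsWithin_of_mem_nhds (Ioi_mem_nhds htτ)] with s hs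
        rw [hY, hY1, if_neg (not_lt.2 (le_of_lt hs))]
  · -- the BSDE identity
    intro t ht
    have h0T : (0:ℝ) ∈ Icc (0:ℝ) T := ⟨le_refl _, hT0⟩
    have hτI : τ ∈ Icc (0:ℝ) T := ⟨hτ0.le, hτT⟩
    have hY00 : Y 0 = Y0 0 := by rw [hY, if_pos hτ0]
    by_cases htτ : t < τ
    · have hcongr : ∫ s in (0:ℝ)..t, f (U s) = ∫ s in (0:ℝ)..t, f (Y1 s s - Y0 s) := by
        refine intervalIntegral.integral_congr ?_
        intro s hs
        rw [Set.uIcc_of_le ht.1] at hs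
        simp only [hU]; rw [if_pos (le_of_lt (lt_of_le_of_lt hs.2 htτ))]
      rw [hY, if_pos htτ, hY00, hcongr, if_neg (not_le.2 htτ), add_zero]
      exact hY0id t ht
    · push_neg at htτ
      have hsplit : ∫ s in (0:ℝ)..t, f (U s) =
          (∫ s in (0:ℝ)..τ, f (U s)) + ∫ s in τ..t, f (U s) :=
        (intervalIntegral.integral_add_adjacent_intervals
          (hUint 0 h0T τ hτI) (hUint τ hτI t ht)).symm
      have h1 : ∫ s in (0:ℝ)..τ, f (U s) = ∫ s in (0:ℝ)..τ, f (Y1 s s - Y0 s) := by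
        refine intervalIntegral.integral_congr ?_
        intro s hs
        rw [Set.uIcc_of_le hτ0.le] at hs
        simp only [hU]; rw [if_pos hs.2]
      have h2 : ∫ s in τ..t, f (U s) = (t - τ) * f 0 := by
        have : ∫ s in τ..t, f (U s) = ∫ s in τ..t, f 0 := by
          refine intervalIntegral.integral_congr_ae (Filter.Eventually.of_forall ?_)
          intro s hs
          rw [Set.uIoc_of_le htτ] at hs
          simp only [hU]; rw [if_neg (not_le.2 hs.1)]
        rw [this, intervalIntegral.integral_const, smul_eq_mul]
      have hYτ : Y0 τ = Y0 0 - ∫ s in (0:ℝ)..τ, f (Y1 s s - Y0 s) := hY0id τ hτI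
      rw [hY, if_neg (not_lt.2 htτ), hY00, hsplit, h1, h2, if_pos htτ, hU,
        if_pos (le_refl τ), hY1, hY1]
      linarith [hYτ]
  · rw [hY, if_neg (not_lt.2 hτT), if_neg (not_lt.2 hτT), hY1]
    ring
end
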